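/- Let A be an associative algebra over a field K and let N₁, …, N_k : A → A be pairwise compatible Nijenhuis tensors. Then any K-linear combination λ₁N₁ + ⋯ + λ_kN_k is a Nijenhuis tensor, and any two such linear combinations are compatible. -/

import Mathlib

/-- The deformed product `A ∘_M B = M(A)·B + A·M(B) − M(A·B)`. -/
def circN {K A : Type*} [Field K] [NonUnitalRing A] [Module K A]
    [SMulCommClass K A A] [IsScalarTower K A A]
    (M : A →ₗ[K] A) (a b : A) : A :=
  M a * b + a * M b - M (a * b)

/-- `M` is a Nijenhuis tensor if `M(A ∘_M B) = M(A)·M(B)` for all `A, B`. -/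
def IsNijenhuis {K A : Type*} [Field K] [NonUnitalRing A] [Module K A]
    [SMulCommClass K A A] [IsScalarTower K A A]
    (M : A →ₗ[K] A) : Prop :=
  ∀ a b : A, M (circN M a b) = M a * M b

section Aux
variable {K A : Type*} [Field K] [NonUnitalRing A] [Module K A]
    [SMulCommClass K A A] [IsScalarTower K A A]

lemma circN_add (M P : A →ₗ[K] A) (a b : A) :
    circN (M + P) a b = circN M a b + circN P a b := by
  simp only [circN, LinearMap.add_apply, add_mul, mul_add]; abel

lemma circN_smul (c : K) (M : A →ₗ[K] A) (a b : A) :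
    circN (c • M) a b = c • circN M a b := by
  simp [circN, smul_mul_assoc, mul_smul_comm, smul_sub, smul_add]

lemma circN_sum {ι : Type*} (s : Finset ι) (M : ι → (A →ₗ[K] A)) (a b : A) :
    circN (∑ i ∈ s, M i) a b = ∑ i ∈ s, circN (M i) a b := by
  classical
  induction s using Finset.induction with
  | empty => simp [circN]
  | insert _ _ h ih => simp [Finset.sum_insert h, circN_add, ih]

lemma mixed_of_compat {M P : A →ₗ[K] A} (hM : IsNijenhuis M) (hP : IsNijenhuis P)
    (hMP : IsNijenhuis (M + P)) (a b : A) :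
    M (circN P a b) + P (circN M a b) = M a * P b + P a * M b := by
  have h := hMP a b
  rw [circN_add] at h
  simp only [LinearMap.add_apply, map_add, add_mul, mul_add] at h
  rw [hM a b, hP a b] at h
  have := h
  abel_nf at this ⊢
  linear_combination (norm := abel) this

lemma sum_is_nijenhuis {k : ℕ} (N : Fin k → (A →ₗ[K] A))
    (hN : ∀ i, IsNijenhuis (N i))
    (hcomp : ∀ i j, i ≠ j → IsNijenhuis (N i + N j))
    (lam : Fin k → K) : IsNijenhuis (∑ i, lam i • N i) := by
  intro a b
  set S : A →ₗ[K] A := ∑ i, lam i • N i with hS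
  have hcS : circN S a b = ∑ j, lam j • circN (N j) a b := by
    rw [hS, circN_sum]
    exact Finset.sum_congr rfl fun j _ => circN_smul _ _ _ _
  -- antisymmetric difference
  set g : Fin k × Fin k → A := fun p =>
    lam p.1 • lam p.2 • (N p.1 (circN (N p.2) a b) - N p.1 a * N p.2 b) with hg
  have hdiag : ∀ i : Fin k, g (i, i) = 0 := by
    intro i; simp [hg, hN i a b]
  have hanti : ∀ i j : Fin k, g (i, j) + g (j, i) = 0 := by
    intro i j
    rcases eq_or_ne i j with rfl | hij
    · simp [hdiag]
    · have hm := mixed_of_compat (hN i) (hN j) (hcomp i j hij) a b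
      simp only [hg]
      rw [smul_comm (lam j) (lam i)]
      rw [← smul_add, ← smul_add]
      have : N i (circN (N j) a b) - N i a * N j b +
          (N j (circN (N i) a b) - N j a * N i b) = 0 := by
        linear_combination (norm := abel) hm
      rw [this, smul_zero, smul_zero]
  have hzero : ∑ p ∈ (Finset.univ ×ˢ Finset.univ : Finset (Fin k × Fin k)), g p = 0 := by
    rw [← Finset.diag_union_offDiag,
      Finset.sum_union (Finset.disjoint_diag_offDiag _)]
    have h1 : ∑ p ∈ Finset.univ.diag, g p = 0 := by
      rw [Finset.sum_diag]
      exact Finset.sum_eq_zero fun i _ => hdiag i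
    have h2 : ∑ p ∈ Finset.univ.offDiag, g p = 0 := by
      refine Finset.sum_involution (fun p _ => (p.2, p.1)) (fun p _ => hanti p.1 p.2)
        (fun p hp _ => ?_) (fun p hp => ?_) (fun p hp => rfl)
      · intro h
        have := (Finset.mem_offDiag.mp hp).2.2
        exact this (congrArg Prod.fst h).symm
      · simp only [Finset.mem_offDiag] at hp ⊢
        exact ⟨hp.2.1, hp.1, fun h => hp.2.2 h.symm⟩
    rw [h1, h2, add_zero]
  -- now conclude
  have hLHS : S (circN S a b) = ∑ j, ∑ i, lam i • lam j • N i (circN (N j) a b) := by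
    rw [hcS, map_sum]
    refine Finset.sum_congr rfl fun j _ => ?_
    rw [map_smul, hS, LinearMap.sum_apply, Finset.smul_sum]
    refine Finset.sum_congr rfl fun i _ => ?_
    rw [LinearMap.smul_apply, smul_comm]
  have hRHS : S a * S b = ∑ j, ∑ i, lam i • lam j • (N i a * N j b) := by
    rw [hS, LinearMap.sum_apply, LinearMap.sum_apply, Finset.sum_mul_sum]
    rw [Finset.sum_comm]
    refine Finset.sum_congr rfl fun j _ => Finset.sum_congr rfl fun i _ => ?_
    rw [LinearMap.smul_apply, LinearMap.smul_apply, smul_mul_assoc, mul_smul_comm, smul_comm]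
  rw [hLHS, hRHS, ← sub_eq_zero, ← Finset.sum_sub_distrib]
  simp_rw [← Finset.sum_sub_distrib, ← smul_sub]
  rw [Finset.sum_product (f := g)] at hzero
  rw [Finset.sum_comm] at hzero
  exact hzero

end Aux

/-- If `N₁, …, N_k` are pairwise compatible Nijenhuis tensors, then every linear
combination of them is a Nijenhuis tensor, and any two linear combinations are
compatible (their sum is again a Nijenhuis tensor). -/
theorem linear_combinations_of_pairwise_compatible_nijenhuis
    {K A : Type*} [Field K] [NonUnitalRing A] [Module K A]
    [SMulCommClass K A A] [IsScalarTower K A A] {k : ℕ}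
    (N : Fin k → (A →ₗ[K] A))
    (hN : ∀ i, IsNijenhuis (N i))
    (hcomp : ∀ i j, i ≠ j → IsNijenhuis (N i + N j)) :
    (∀ lam : Fin k → K, IsNijenhuis (∑ i, lam i • N i)) ∧
    (∀ lam mu : Fin k → K,
      IsNijenhuis ((∑ i, lam i • N i) + ∑ i, mu i • N i)) := by
  refine ⟨fun lam => sum_is_nijenhuis N hN hcomp lam, fun lam mu => ?_⟩
  have : (∑ i, lam i • N i) + ∑ i, mu i • N i = ∑ i, (lam i + mu i) • N i := by
    rw [← Finset.sum_add_distrib]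
    exact Finset.sum_congr rfl fun i _ => (add_smul _ _ _).symm
  rw [this]
  exact sum_is_nijenhuis N hN hcomp _
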